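/- arXiv:1401.0192 — 4 statements merged into one kernel-verified Lean document; each statement's English description precedes it below -/
import Mathlib

section
/- Let X ∈ L^2 with distribution μ, and let (x^(k))_k be a bounded sequence of N-tuples in (R^d)^N with distortions 𝒢(x^(k)) ≤ c < e_{N−1}(X)² for all k, where 𝒢(x) = E min_{1≤i≤N}|X − x_i|². If along a subsequence some components tend to infinity while the components indexed by a nonempty proper subset I^c converge to limits x_j^∞, then liminf_k 𝒢(x^(φ(k))) ≥ E min_{j∈I^c}|X − x_j^∞|² ≥ e_{|I^c|}(X)² ≥ e_{N−1}(X)², a contradiction. Consequently, any sequence of Lloyd iterates starting from a grid with e(Γ^(0),X) < e_{N−1}(X) is bounded. -/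
open MeasureTheory Filter Topology

private lemma aux_int {Ω : Type*} [MeasurableSpace Ω] (P : Measure Ω) [IsProbabilityMeasure P]
    {d m : ℕ} (hm : 0 < m)
    (X : Ω → EuclideanSpace ℝ (Fin d)) (hXm : Measurable X)
    (hXsq : Integrable (fun ω => ‖X ω‖ ^ 2) P)
    (y : Fin m → EuclideanSpace ℝ (Fin d)) :
    Integrable (fun ω => ⨅ i, dist (X ω) (y i) ^ 2) P := by
  haveI : Nonempty (Fin m) := ⟨⟨0, hm⟩⟩
  set i1 : Fin m := ⟨0, hm⟩
  have hmeas : Measurable (fun ω => ⨅ i, dist (X ω) (y i) ^ 2) :=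
    Measurable.iInf fun i => (hXm.dist measurable_const).pow_const 2
  refine ((hXsq.const_mul 2).add (integrable_const (2 * ‖y i1‖ ^ 2))).mono'
    hmeas.aestronglyMeasurable ?_
  filter_upwards with ω
  have h0 : (0:ℝ) ≤ ⨅ i, dist (X ω) (y i) ^ 2 := le_ciInf fun i => by positivity
  have h1 : (⨅ i, dist (X ω) (y i) ^ 2) ≤ dist (X ω) (y i1) ^ 2 :=
    ciInf_le (Finite.bddBelow_range _) i1
  have h2 : dist (X ω) (y i1) ≤ ‖X ω‖ + ‖y i1‖ := by
    rw [dist_eq_norm]; exact norm_sub_le _ _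
  rw [Real.norm_eq_abs, abs_of_nonneg h0]
  simp only [Pi.add_apply]
  nlinarith [norm_nonneg (X ω), norm_nonneg (y i1), dist_nonneg (x := X ω) (y := y i1),
    sq_nonneg (‖X ω‖ - ‖y i1‖), pow_le_pow_left₀ (dist_nonneg (x := X ω) (y := y i1)) h2 2]

/-- Any sequence of `N`-tuples whose distortion stays below a level `c` strictly
smaller than the optimal distortion at level `N − 1` is bounded; in particular the
Lloyd iterates started under the splitting assumption are bounded. -/
theorem lloyd_iterates_bounded
    {Ω : Type*} [MeasurableSpace Ω] (P : Measure Ω) [IsProbabilityMeasure P]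
    {d N : ℕ} (hN : 1 < N)
    (X : Ω → EuclideanSpace ℝ (Fin d)) (hXm : Measurable X) (hX : MemLp X 2 P)
    (c : ℝ)
    (hc : c < sInf {r : ℝ | ∃ y : Fin (N - 1) → EuclideanSpace ℝ (Fin d),
        r = ∫ ω, (⨅ j, dist (X ω) (y j) ^ 2) ∂P})
    (x : ℕ → Fin N → EuclideanSpace ℝ (Fin d))
    (hG : ∀ k, ∫ ω, (⨅ i, dist (X ω) (x k i) ^ 2) ∂P ≤ c) :
    ∃ R : ℝ, ∀ k i, ‖x k i‖ ≤ R := by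
  classical
  by_contra hbdd
  push_neg at hbdd
  haveI : Nonempty (Fin N) := ⟨⟨0, by omega⟩⟩
  haveI : Nonempty (Fin (N - 1)) := ⟨⟨0, by omega⟩⟩
  set S : Set ℝ := {r : ℝ | ∃ y : Fin (N - 1) → EuclideanSpace ℝ (Fin d),
      r = ∫ ω, (⨅ j, dist (X ω) (y j) ^ 2) ∂P} with hSdef
  have hSbdd : BddBelow S := by
    refine ⟨0, fun r hr => ?_⟩
    obtain ⟨y, rfl⟩ := hr
    exact integral_nonneg fun ω => le_ciInf fun j => by positivity
  set e := sInf S with he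
  have hce : c < e := hc
  set ε : ℝ := (e - c) / 2 with hεdef
  have hεpos : 0 < ε := by simp only [hεdef]; linarith
  have hXsq : Integrable (fun ω => ‖X ω‖ ^ 2) P := hX.norm.integrable_sq
  -- choose the tail truncation level
  have htail : Tendsto
      (fun n : ℕ => ∫ ω, (if (n : ℝ) ≤ ‖X ω‖ then 4 * ‖X ω‖ ^ 2 else 0) ∂P)
      atTop (𝓝 0) := by
    have h := tendsto_integral_of_dominated_convergence
      (F := fun n : ℕ => fun ω => if (n : ℝ) ≤ ‖X ω‖ then 4 * ‖X ω‖ ^ 2 else 0)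
      (f := fun _ => (0:ℝ)) (bound := fun ω => 4 * ‖X ω‖ ^ 2)
      (fun n => (((Measurable.ite (measurableSet_le measurable_const hXm.norm)
        ((hXm.norm.pow_const 2).const_mul 4) measurable_const)).aestronglyMeasurable))
      (hXsq.const_mul 4)
      (fun n => by
        filter_upwards with ω
        rw [Real.norm_eq_abs]
        split_ifs with h
        · rw [abs_of_nonneg (by positivity)]
        · rw [abs_zero]; positivity)
      (by
        filter_upwards with ω
        have : ∀ᶠ n : ℕ in atTop, (if (n : ℝ) ≤ ‖X ω‖ then 4 * ‖X ω‖ ^ 2 else 0) = 0 := by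
          filter_upwards [eventually_gt_atTop ⌈‖X ω‖⌉₊] with n hn
          rw [if_neg]
          push_neg
          calc ‖X ω‖ ≤ (⌈‖X ω‖⌉₊ : ℝ) := Nat.le_ceil _
            _ < n := by exact_mod_cast hn
        exact Tendsto.congr' (this.mono fun n h => h.symm) tendsto_const_nhds)
    simpa using h
  obtain ⟨n, hn⟩ : ∃ n : ℕ,
      ∫ ω, (if (n : ℝ) ≤ ‖X ω‖ then 4 * ‖X ω‖ ^ 2 else 0) ∂P < ε :=
    (htail.eventually_lt_const hεpos).exists
  set B0 : ℝ := (n : ℝ) with hB0def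
  have hB0nn : (0:ℝ) ≤ B0 := Nat.cast_nonneg n
  set M : ℕ → ℝ := fun j => (B0 + 1) * 3 ^ j with hMdef
  have hMlt : ∀ a b : ℕ, a < b → M a < M b := by
    intro a b hab
    have h3 : (3:ℝ) ^ a < 3 ^ b := by
      apply pow_lt_pow_right₀ (by norm_num) hab
    simp only [hMdef]
    nlinarith
  have hMle : ∀ a b : ℕ, a ≤ b → M a ≤ M b := by
    intro a b hab
    rcases eq_or_lt_of_le hab with rfl | h
    · exact le_refl _
    · exact (hMlt a b h).le
  obtain ⟨k, i0, hi0⟩ := hbdd (M N)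
  -- pigeonhole: find a gap
  have hgap : ∃ j < N, ∀ i, ‖x k i‖ ≤ M j ∨ M (j + 1) < ‖x k i‖ := by
    by_contra hcon
    push_neg at hcon
    have hchoice : ∀ j : Fin N, ∃ i, M (j : ℕ) < ‖x k i‖ ∧ ‖x k i‖ ≤ M ((j : ℕ) + 1) := by
      intro j
      obtain ⟨i, hi1, hi2⟩ := hcon (j : ℕ) j.isLt
      exact ⟨i, hi1, hi2⟩
    choose f hf1 hf2 using hchoice
    have hinj : Function.Injective f := by
      intro a b hab
      by_contra hne
      have hne' : (a : ℕ) ≠ (b : ℕ) := fun h => hne (Fin.ext h)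
      rcases hne'.lt_or_gt with h | h
      · have h1 : M ((a:ℕ)+1) ≤ M (b:ℕ) := hMle _ _ (by omega)
        have := hf1 b; have := hf2 a
        rw [hab] at *
        linarith
      · have h1 : M ((b:ℕ)+1) ≤ M (a:ℕ) := hMle _ _ (by omega)
        have := hf1 a; have := hf2 b
        rw [hab] at *
        linarith
    have hsurj : Function.Surjective f := Finite.injective_iff_surjective.mp hinj
    obtain ⟨j, hj⟩ := hsurj i0
    have h1 : ‖x k i0‖ ≤ M ((j:ℕ)+1) := hj ▸ hf2 j
    have h2 : M ((j:ℕ)+1) ≤ M N := hMle _ _ (by omega)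
    linarith
  obtain ⟨j, hjN, hB⟩ := hgap
  set B : ℝ := M j with hBdef
  have hBpos : 0 < B := by
    simp only [hBdef, hMdef]; positivity
  have hB0B : B0 ≤ B := by
    have : (1:ℝ) ≤ 3 ^ j := by {have := pow_le_pow_right₀ (by norm_num : (1:ℝ) ≤ 3) (Nat.zero_le j); simpa using this}
    simp only [hBdef, hMdef]; nlinarith
  have h3B : M (j + 1) = 3 * B := by
    simp only [hBdef, hMdef, pow_succ]; ring
  have hi0big : 3 * B < ‖x k i0‖ := by
    have : M (j+1) ≤ M N := hMle _ _ (by omega)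
    rw [h3B] at this; linarith
  -- the embedding skipping i0
  set emb : Fin (N - 1) → Fin N := fun t =>
    if (t : ℕ) < (i0 : ℕ) then ⟨t, by have := t.isLt; omega⟩
    else ⟨(t : ℕ) + 1, by have := t.isLt; omega⟩ with hembdef
  have hsurj : ∀ i : Fin N, i ≠ i0 → ∃ t, emb t = i := by
    intro i hne
    have hne' : (i : ℕ) ≠ (i0 : ℕ) := fun h => hne (Fin.ext h)
    rcases hne'.lt_or_gt with h | h
    · refine ⟨⟨(i : ℕ), by have := i0.isLt; omega⟩, ?_⟩
      simp only [hembdef]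
      rw [if_pos (by exact h)]
    · refine ⟨⟨(i : ℕ) - 1, by have := i.isLt; omega⟩, ?_⟩
      simp only [hembdef]
      rw [if_neg (by simp; omega)]
      apply Fin.ext
      simp
      omega
  set y : Fin (N - 1) → EuclideanSpace ℝ (Fin d) := fun t =>
    if ‖x k (emb t)‖ ≤ B then x k (emb t) else 0 with hydef
  have hynorm : ∀ t, ‖y t‖ ≤ B := by
    intro t
    simp only [hydef]
    split_ifs with h
    · exact h
    · simpa using hBpos.le
  have hyhit : ∀ i : Fin N, i ≠ i0 → ‖x k i‖ ≤ B → ∃ t, y t = x k i := by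
    intro i hne hle
    obtain ⟨t, ht⟩ := hsurj i hne
    refine ⟨t, ?_⟩
    simp only [hydef, ht]
    rw [if_pos hle]
  -- pointwise comparison
  have hpt : ∀ ω, (⨅ t, dist (X ω) (y t) ^ 2)
      ≤ (⨅ i, dist (X ω) (x k i) ^ 2) + (if B ≤ ‖X ω‖ then 4 * ‖X ω‖ ^ 2 else 0) := by
    intro ω
    obtain ⟨i, hi⟩ := exists_eq_ciInf_of_finite (f := fun i => dist (X ω) (x k i) ^ 2)
    have hm1nn : (0:ℝ) ≤ ⨅ i, dist (X ω) (x k i) ^ 2 := le_ciInf fun _ => by positivity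
    have htnn : (0:ℝ) ≤ (if B ≤ ‖X ω‖ then 4 * ‖X ω‖ ^ 2 else 0) := by
      split_ifs <;> positivity
    by_cases hcase : i ≠ i0 ∧ ‖x k i‖ ≤ B
    · obtain ⟨t, ht⟩ := hyhit i hcase.1 hcase.2
      have h1 : (⨅ t, dist (X ω) (y t) ^ 2) ≤ dist (X ω) (y t) ^ 2 :=
        ciInf_le (Finite.bddBelow_range _) t
      rw [ht] at h1
      rw [hi] at h1
      linarith
    · have hfar : 3 * B < ‖x k i‖ := by
        rw [not_and_or, not_not, not_le] at hcase
        rcases hcase with rfl | hcase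
        · exact hi0big
        · rcases hB i with h | h
          · exact absurd h (not_le.mpr hcase)
          · rwa [h3B] at h
      have hd : ‖x k i‖ - ‖X ω‖ ≤ dist (X ω) (x k i) := by
        rw [dist_eq_norm, norm_sub_rev]
        exact (norm_sub_norm_le _ _).trans (le_refl _)
      have hm2 : (⨅ t, dist (X ω) (y t) ^ 2) ≤ (‖X ω‖ + B) ^ 2 := by
        obtain ⟨t0⟩ := (inferInstance : Nonempty (Fin (N - 1)))
        refine le_trans (ciInf_le (Finite.bddBelow_range _) t0) ?_
        have hdy : dist (X ω) (y t0) ≤ ‖X ω‖ + B := by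
          rw [dist_eq_norm]
          exact (norm_sub_le _ _).trans (by linarith [hynorm t0])
        exact pow_le_pow_left₀ dist_nonneg hdy 2
      by_cases hω : B ≤ ‖X ω‖
      · rw [if_pos hω]
        nlinarith [norm_nonneg (X ω)]
      · rw [if_neg hω]
        push_neg at hω
        have hdist : 3 * B - ‖X ω‖ ≤ dist (X ω) (x k i) := by linarith
        have hkey : (‖X ω‖ + B) ^ 2 ≤ dist (X ω) (x k i) ^ 2 := by
          nlinarith [dist_nonneg (x := X ω) (y := x k i), norm_nonneg (X ω)]
        rw [hi] at hkey
        linarith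
  -- integrate
  haveI : NeZero N := ⟨by omega⟩
  have hint1 : Integrable (fun ω => ⨅ i, dist (X ω) (x k i) ^ 2) P :=
    aux_int P (by omega) X hXm hXsq (x k)
  have hint2 : Integrable (fun ω => ⨅ t, dist (X ω) (y t) ^ 2) P :=
    aux_int P (by omega) X hXm hXsq y
  have hmeas_tail : ∀ b : ℝ, Integrable (fun ω => if b ≤ ‖X ω‖ then 4 * ‖X ω‖ ^ 2 else 0) P := by
    intro b
    refine (hXsq.const_mul 4).mono'
      (((Measurable.ite (measurableSet_le measurable_const hXm.norm)
        ((hXm.norm.pow_const 2).const_mul 4) measurable_const)).aestronglyMeasurable) ?_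
    filter_upwards with ω
    rw [Real.norm_eq_abs]
    split_ifs with h
    · rw [abs_of_nonneg (by positivity)]
    · rw [abs_zero]; positivity
  have hkey : (∫ ω, (⨅ t, dist (X ω) (y t) ^ 2) ∂P)
      ≤ (∫ ω, (⨅ i, dist (X ω) (x k i) ^ 2) ∂P)
        + ∫ ω, (if B ≤ ‖X ω‖ then 4 * ‖X ω‖ ^ 2 else 0) ∂P := by
    rw [← integral_add hint1 (hmeas_tail B)]
    exact integral_mono hint2 (hint1.add (hmeas_tail B)) hpt
  have htail_le : (∫ ω, (if B ≤ ‖X ω‖ then 4 * ‖X ω‖ ^ 2 else 0) ∂P)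
      ≤ ∫ ω, (if B0 ≤ ‖X ω‖ then 4 * ‖X ω‖ ^ 2 else 0) ∂P := by
    refine integral_mono (hmeas_tail B) (hmeas_tail B0) fun ω => ?_
    by_cases h : B ≤ ‖X ω‖
    · rw [if_pos h, if_pos (le_trans hB0B h)]
    · rw [if_neg h]
      split_ifs <;> positivity
  have hmem : (∫ ω, (⨅ t, dist (X ω) (y t) ^ 2) ∂P) ∈ S := ⟨y, rfl⟩
  have hfin : e ≤ ∫ ω, (⨅ t, dist (X ω) (y t) ^ 2) ∂P := csInf_le hSbdd hmem
  have hGk := hG k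
  simp only [hB0def] at htail_le
  linarith
end

section
/- Under the Splitting Assumption, every limiting value x^(∞) of the (bounded) consistent representations (x^(k))_k of the Lloyd iterates has N pairwise distinct components; i.e., no two components of x^(∞) coincide. -/
open MeasureTheory Filter Topology

/-- Under the splitting assumption (distortion level kept strictly below the optimal
distortion at level `N − 1`), every limit of a convergent subsequence of the iterates
has `N` pairwise distinct components. -/
theorem limit_components_pairwise_distinct
    {Ω : Type*} [MeasurableSpace Ω] (P : Measure Ω) [IsProbabilityMeasure P]
    {d N : ℕ} (hN : 1 < N)
    (X : Ω → EuclideanSpace ℝ (Fin d)) (hXm : Measurable X) (hX : MemLp X 2 P)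
    (c : ℝ)
    (hc : c < sInf {r : ℝ | ∃ y : Fin (N - 1) → EuclideanSpace ℝ (Fin d),
        r = ∫ ω, (⨅ j, dist (X ω) (y j) ^ 2) ∂P})
    (x : ℕ → Fin N → EuclideanSpace ℝ (Fin d))
    (hG : ∀ k, ∫ ω, (⨅ i, dist (X ω) (x k i) ^ 2) ∂P ≤ c)
    (φ : ℕ → ℕ) (hφ : StrictMono φ)
    (xlim : Fin N → EuclideanSpace ℝ (Fin d))
    (hlim : Tendsto (fun k => x (φ k)) atTop (𝓝 xlim)) :
    ∀ i j, i ≠ j → xlim i ≠ xlim j := by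
  obtain ⟨M, rfl⟩ : ∃ M, N = M + 1 := ⟨N - 1, (Nat.succ_pred_eq_of_pos (by omega)).symm⟩
  have hM : 0 < M := by omega
  haveI : Nonempty (Fin (M + 1)) := ⟨0⟩
  haveI : Nonempty (Fin M) := ⟨⟨0, hM⟩⟩
  intro i j hij heq
  -- basic facts about the integrand
  have hbdd : ∀ (a : EuclideanSpace ℝ (Fin d)) {n : ℕ} (v : Fin n → EuclideanSpace ℝ (Fin d)),
      BddBelow (Set.range fun t => dist a (v t) ^ 2) := by
    intro a n v
    exact ⟨0, by rintro r ⟨t, rfl⟩; positivity⟩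
  have hnn : ∀ (a : EuclideanSpace ℝ (Fin d)) {n : ℕ} (v : Fin n → EuclideanSpace ℝ (Fin d)),
      0 ≤ ⨅ t, dist a (v t) ^ 2 := by
    intro a n v
    exact Real.iInf_nonneg fun t => by positivity
  have hmeas : ∀ {n : ℕ} (v : Fin n → EuclideanSpace ℝ (Fin d)),
      Measurable fun ω => ⨅ t, dist (X ω) (v t) ^ 2 := by
    intro n v
    exact Measurable.iInf fun t => (hXm.dist measurable_const).pow_const 2
  have hint : ∀ {n : ℕ} [Nonempty (Fin n)] (v : Fin n → EuclideanSpace ℝ (Fin d)),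
      Integrable (fun ω => ⨅ t, dist (X ω) (v t) ^ 2) P := by
    intro n _ v
    obtain ⟨t0⟩ := (inferInstance : Nonempty (Fin n))
    have hg : Integrable (fun ω => ‖X ω - v t0‖ ^ 2) P :=
      (hX.sub (memLp_const (v t0))).norm.integrable_sq
    refine hg.mono' ((hmeas v).aestronglyMeasurable) (Filter.Eventually.of_forall fun ω => ?_)
    rw [Real.norm_eq_abs, abs_of_nonneg (hnn _ v)]
    calc ⨅ t, dist (X ω) (v t) ^ 2 ≤ dist (X ω) (v t0) ^ 2 := ciInf_le (hbdd _ v) t0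
      _ = ‖X ω - v t0‖ ^ 2 := by rw [dist_eq_norm]
  -- pointwise convergence of the integrands along the subsequence
  have hcont : ∀ (a : EuclideanSpace ℝ (Fin d)),
      Continuous fun v : Fin (M + 1) → EuclideanSpace ℝ (Fin d) => ⨅ t, dist a (v t) ^ 2 := by
    intro a
    have : ∀ v : Fin (M + 1) → EuclideanSpace ℝ (Fin d),
        (⨅ t, dist a (v t) ^ 2) =
          Finset.univ.inf' Finset.univ_nonempty (fun t => dist a (v t) ^ 2) := by
      intro v; rw [Finset.inf'_univ_eq_ciInf]
    simp only [this]
    exact Continuous.finset_inf'_apply Finset.univ_nonempty fun t _ =>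
      (continuous_const.dist (continuous_apply t)).pow 2
  have hpt : ∀ ω, Tendsto (fun k => ⨅ t, dist (X ω) (x (φ k) t) ^ 2) atTop
      (𝓝 (⨅ t, dist (X ω) (xlim t) ^ 2)) :=
    fun ω => ((hcont (X ω)).continuousAt.tendsto).comp hlim
  -- c is nonnegative
  have hc0 : 0 ≤ c := le_trans (integral_nonneg fun ω => hnn _ _) (hG 0)
  -- Fatou: the limit distortion is at most c
  have hlimle : ∫ ω, (⨅ t, dist (X ω) (xlim t) ^ 2) ∂P ≤ c := by
    have hkey : (∫⁻ ω, ENNReal.ofReal (⨅ t, dist (X ω) (xlim t) ^ 2) ∂P) ≤ ENNReal.ofReal c := by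
      have h1 : ∀ ω, ENNReal.ofReal (⨅ t, dist (X ω) (xlim t) ^ 2) =
          liminf (fun k => ENNReal.ofReal (⨅ t, dist (X ω) (x (φ k) t) ^ 2)) atTop := by
        intro ω
        exact ((ENNReal.continuous_ofReal.continuousAt.tendsto).comp (hpt ω)).liminf_eq.symm
      calc (∫⁻ ω, ENNReal.ofReal (⨅ t, dist (X ω) (xlim t) ^ 2) ∂P)
          = ∫⁻ ω, liminf (fun k => ENNReal.ofReal (⨅ t, dist (X ω) (x (φ k) t) ^ 2)) atTop ∂P := by
            simp only [h1]
        _ ≤ liminf (fun k => ∫⁻ ω, ENNReal.ofReal (⨅ t, dist (X ω) (x (φ k) t) ^ 2) ∂P) atTop :=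
            lintegral_liminf_le fun k => (hmeas _).ennreal_ofReal
        _ ≤ ENNReal.ofReal c := by
            refine liminf_le_of_le (by isBoundedDefault) ?_
            intro b hb
            obtain ⟨k, hk⟩ := hb.exists
            refine le_trans hk ?_
            rw [← ofReal_integral_eq_lintegral_ofReal (hint _)
              (Filter.Eventually.of_forall fun ω => hnn _ _)]
            exact ENNReal.ofReal_le_ofReal (hG (φ k))
    have := ENNReal.toReal_mono ENNReal.ofReal_ne_top hkey
    rwa [ENNReal.toReal_ofReal hc0,
      ← integral_eq_lintegral_of_nonneg_ae (Filter.Eventually.of_forall fun ω => hnn _ _)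
        (hmeas _).aestronglyMeasurable] at this
  -- build an (N-1)-tuple achieving the same distortion
  set y : Fin M → EuclideanSpace ℝ (Fin d) := fun t => xlim (j.succAbove t) with hy
  have hinf_eq : ∀ ω, (⨅ t, dist (X ω) (y t) ^ 2) = ⨅ t, dist (X ω) (xlim t) ^ 2 := by
    intro ω
    refine le_antisymm (le_ciInf fun i' => ?_) (le_ciInf fun t => ?_)
    · by_cases h : i' = j
      · obtain ⟨t, ht⟩ := Fin.exists_succAbove_eq hij
        calc (⨅ t, dist (X ω) (y t) ^ 2) ≤ dist (X ω) (y t) ^ 2 := ciInf_le (hbdd _ y) t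
          _ = dist (X ω) (xlim i') ^ 2 := by rw [hy]; simp only [ht, heq, h]
      · obtain ⟨t, ht⟩ := Fin.exists_succAbove_eq h
        calc (⨅ t, dist (X ω) (y t) ^ 2) ≤ dist (X ω) (y t) ^ 2 := ciInf_le (hbdd _ y) t
          _ = dist (X ω) (xlim i') ^ 2 := by rw [hy]; simp only [ht]
    · exact ciInf_le (hbdd _ xlim) (j.succAbove t)
  have hmem : (∫ ω, (⨅ t, dist (X ω) (xlim t) ^ 2) ∂P) ∈
      {r : ℝ | ∃ y : Fin (M + 1 - 1) → EuclideanSpace ℝ (Fin d),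
        r = ∫ ω, (⨅ j, dist (X ω) (y j) ^ 2) ∂P} := by
    refine ⟨y, ?_⟩
    exact (integral_congr_ae (Filter.Eventually.of_forall fun ω => hinf_eq ω)).symm
  have hbddset : BddBelow {r : ℝ | ∃ y : Fin (M + 1 - 1) → EuclideanSpace ℝ (Fin d),
      r = ∫ ω, (⨅ j, dist (X ω) (y j) ^ 2) ∂P} := by
    refine ⟨0, ?_⟩
    rintro r ⟨y', rfl⟩
    exact integral_nonneg fun ω => hnn _ _
  have := csInf_le hbddset hmem
  linarith
end

section
/- Suppose a subsequence of Lloyd iterate grids Γ^(φ(k)) converges to a grid Γ^(∞) of N pairwise distinct points, and the boundaries of the Voronoi cells of Γ^(∞) are P_X-negligible. Then for every Y ∈ L^1(P), E(Y | X̂^{Γ^(φ(k))}) → E(Y | X̂^{Γ^(∞)}) almost surely as k → ∞. -/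
open MeasureTheory Filter Topology


noncomputable def avgOn {Ω : Type*} [MeasurableSpace Ω] (P : Measure Ω) (Y : Ω → ℝ)
    (A : Set Ω) : ℝ :=
  if P A = 0 then 0 else (∫ ω in A, Y ω ∂P) / (P A).toReal

/-- avgOn times measure equals integral. -/
lemma avgOn_mul {Ω : Type*} [MeasurableSpace Ω] (P : Measure Ω) [IsFiniteMeasure P]
    (Y : Ω → ℝ) (A : Set Ω) :
    avgOn P Y A * (P A).toReal = ∫ ω in A, Y ω ∂P := by
  unfold avgOn
  by_cases h : P A = 0
  · simp [h, Measure.restrict_eq_zero.mpr h]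
  · rw [if_neg h, div_mul_cancel₀]
    exact ENNReal.toReal_ne_zero.mpr ⟨h, measure_ne_top P A⟩

/-- Conditional expectation with respect to a finite-range function. -/
lemma condexp_finRange {Ω E : Type*} [MeasurableSpace Ω] [MeasurableSpace E]
    [MeasurableSingletonClass E]
    (P : Measure Ω) [IsProbabilityMeasure P]
    (f : Ω → E) (hf : Measurable f) (t : Finset E) (ht : ∀ ω, f ω ∈ t)
    (Y : Ω → ℝ) (hY : Integrable Y P) :
    (fun ω => avgOn P Y (f ⁻¹' {f ω})) =ᵐ[P]
      P[Y | MeasurableSpace.comap f inferInstance] := by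
  have hm : MeasurableSpace.comap f inferInstance ≤ (inferInstance : MeasurableSpace Ω) :=
    hf.comap_le
  have hBmeas : ∀ v : E, MeasurableSet (f ⁻¹' {v}) :=
    fun v => hf (measurableSet_singleton v)
  have hBm : ∀ v : E, MeasurableSet[MeasurableSpace.comap f inferInstance] (f ⁻¹' {v}) :=
    fun v => ⟨{v}, measurableSet_singleton v, rfl⟩
  -- the sum form of g
  have hsum : (fun ω => avgOn P Y (f ⁻¹' {f ω})) =
      fun ω => ∑ v ∈ t, (f ⁻¹' {v}).indicator (fun _ => avgOn P Y (f ⁻¹' {v})) ω := by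
    funext ω
    rw [Finset.sum_eq_single_of_mem (f ω) (ht ω)]
    · simp [Set.indicator_of_mem, Set.mem_preimage]
    · intro v _ hv
      exact Set.indicator_of_notMem (by simp [Ne.symm hv]) _
  have hgm : Measurable[MeasurableSpace.comap f inferInstance]
      (fun ω => avgOn P Y (f ⁻¹' {f ω})) := by
    rw [hsum]
    exact Finset.measurable_sum _ fun v _ => (measurable_const.indicator (hBm v))
  have hgint : Integrable (fun ω => avgOn P Y (f ⁻¹' {f ω})) P := by
    rw [hsum]
    exact integrable_finset_sum _ fun v _ =>
      (integrable_const _).indicator (hBmeas v)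
  refine ae_eq_condExp_of_forall_setIntegral_eq hm hY
    (fun s _ _ => hgint.integrableOn) ?_
    (Measurable.stronglyMeasurable hgm).aestronglyMeasurable
  rintro s ⟨S, hS, rfl⟩ _
  -- LHS
  have hLHS : ∫ ω in f ⁻¹' S, avgOn P Y (f ⁻¹' {f ω}) ∂P
      = ∑ v ∈ t, avgOn P Y (f ⁻¹' {v}) * (P (f ⁻¹' {v} ∩ f ⁻¹' S)).toReal := by
    rw [hsum, integral_finset_sum]
    · refine Finset.sum_congr rfl fun v _ => ?_
      rw [setIntegral_indicator (hBmeas v), setIntegral_const, smul_eq_mul, mul_comm,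
        Set.inter_comm]
      rfl
    · exact fun v _ => ((integrable_const _).indicator (hBmeas v)).integrableOn
  rw [hLHS]
  -- RHS as sum over atoms
  have hcover : f ⁻¹' S = ⋃ v ∈ t, (f ⁻¹' {v} ∩ f ⁻¹' S) := by
    ext ω
    simp only [Set.mem_iUnion, Set.mem_inter_iff, Set.mem_preimage, Set.mem_singleton_iff]
    constructor
    · intro h; exact ⟨f ω, ht ω, rfl, h⟩
    · rintro ⟨v, _, _, h⟩; exact h
  have hRHS : ∫ ω in f ⁻¹' S, Y ω ∂P
      = ∑ v ∈ t, ∫ ω in f ⁻¹' {v} ∩ f ⁻¹' S, Y ω ∂P := by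
    conv_lhs => rw [hcover]
    rw [integral_biUnion_finset t
      (fun v _ => (hBmeas v).inter (hf hS))
      (fun v _ w _ hvw => Set.disjoint_left.mpr (by
        rintro ω ⟨h1, _⟩ ⟨h2, _⟩
        exact hvw (by rw [← h1, ← h2])))
      (fun v _ => hY.integrableOn)]
  rw [hRHS]
  refine Finset.sum_congr rfl fun v _ => ?_
  by_cases hvS : v ∈ S
  · have : f ⁻¹' {v} ∩ f ⁻¹' S = f ⁻¹' {v} := by
      apply Set.inter_eq_left.mpr
      intro ω hω
      simp only [Set.mem_preimage, Set.mem_singleton_iff] at hω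
      simp [Set.mem_preimage, hω, hvS]
    rw [this, avgOn_mul]
  · have : f ⁻¹' {v} ∩ f ⁻¹' S = ∅ := by
      ext ω
      simp only [Set.mem_inter_iff, Set.mem_preimage, Set.mem_singleton_iff,
        Set.mem_empty_iff_false, iff_false, not_and]
      intro h; rw [h]; exact hvS
    simp [this]

/-- Nearest-neighbour projection onto a grid along a given Voronoi partition. -/
noncomputable def nnProj {d N : ℕ} (x : Fin N → EuclideanSpace ℝ (Fin d))
    (C : Fin N → Set (EuclideanSpace ℝ (Fin d))) (ξ : EuclideanSpace ℝ (Fin d)) :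
    EuclideanSpace ℝ (Fin d) :=
  ∑ i, (C i).indicator (fun _ => x i) ξ

lemma nnProj_eq_of_mem {d N : ℕ} {x : Fin N → EuclideanSpace ℝ (Fin d)}
    {C : Fin N → Set (EuclideanSpace ℝ (Fin d))}
    (hpart : ∀ ξ, ∃! i, ξ ∈ C i) {ξ : EuclideanSpace ℝ (Fin d)} {i : Fin N}
    (hi : ξ ∈ C i) : nnProj x C ξ = x i := by
  unfold nnProj
  rw [Finset.sum_eq_single_of_mem i (Finset.mem_univ i)]
  · exact Set.indicator_of_mem hi _
  · intro j _ hj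
    refine Set.indicator_of_notMem (fun hjm => hj ?_) _
    exact (hpart ξ).unique hjm hi

/-- Interior points of a set inside a half space `dist · a ≤ dist · b` with `a ≠ b`
are strictly closer to `a`. -/
lemma dist_lt_of_interior {E : Type*} [NormedAddCommGroup E] [InnerProductSpace ℝ E]
    {s : Set E} {a b ξ : E} (hab : a ≠ b)
    (hs : ∀ η ∈ s, dist η a ≤ dist η b) (hξ : ξ ∈ interior s) :
    dist ξ a < dist ξ b := by
  rcases lt_or_eq_of_le (hs ξ (interior_subset hξ)) with h | h
  · exact h
  exfalso
  -- perturb towards b - a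
  obtain ⟨ε, hε, hball⟩ := Metric.isOpen_iff.mp isOpen_interior ξ hξ
  set u : E := b - a with hu
  have hu0 : u ≠ 0 := sub_ne_zero.mpr (Ne.symm hab)
  have hnu : 0 < ‖u‖ := norm_pos_iff.mpr hu0
  set t : ℝ := ε / (2 * ‖u‖) with htdef
  have ht : 0 < t := by positivity
  set ξ' : E := ξ + t • u with hξ'
  have hmem : ξ' ∈ s := by
    apply interior_subset
    apply hball
    simp only [Metric.mem_ball, hξ', dist_self_add_left, norm_smul, Real.norm_eq_abs,
      abs_of_pos ht]
    calc t * ‖u‖ = ε / 2 := by rw [htdef, div_mul_eq_mul_div, mul_div_mul_right _ _ hnu.ne']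
      _ < ε := by linarith
  have hle := hs ξ' hmem
  -- compute squared distances
  have key : ‖ξ' - b‖ ^ 2 < ‖ξ' - a‖ ^ 2 := by
    have e1 : ξ' - a = (ξ - a) + t • u := by rw [hξ']; abel
    have e2 : ξ' - b = (ξ - b) + t • u := by rw [hξ']; abel
    rw [e1, e2, norm_add_sq_real, norm_add_sq_real]
    have heq : ‖ξ - a‖ = ‖ξ - b‖ := by
      rw [← dist_eq_norm, ← dist_eq_norm]; exact h
    have hi : inner ℝ (ξ - a) (t • u) - inner ℝ (ξ - b) (t • u) = (t * ‖u‖ ^ 2 : ℝ) := by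
      rw [← inner_sub_left]
      have : (ξ - a) - (ξ - b) = u := by rw [hu]; abel
      rw [this, real_inner_smul_right, real_inner_self_eq_norm_sq]
    have hpos : (0:ℝ) < t * ‖u‖ ^ 2 := by positivity
    have heq2 : ‖ξ - a‖ ^ 2 = ‖ξ - b‖ ^ 2 := by rw [heq]
    linarith
  have : ‖ξ' - a‖ ≤ ‖ξ' - b‖ := by
    rw [← dist_eq_norm, ← dist_eq_norm]; exact hle
  nlinarith [norm_nonneg (ξ' - a), norm_nonneg (ξ' - b)]

lemma measurable_nnProj {d N : ℕ} (x : Fin N → EuclideanSpace ℝ (Fin d))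
    {C : Fin N → Set (EuclideanSpace ℝ (Fin d))} (hC : ∀ i, MeasurableSet (C i)) :
    Measurable (nnProj x C) :=
  Finset.measurable_sum Finset.univ fun i _ =>
    Measurable.indicator measurable_const (hC i)

/-- If a subsequence of Lloyd grids converges to a limiting grid of pairwise distinct
points whose Voronoi cell boundaries are `P_X`-negligible, then conditional
expectations given the corresponding quantizations converge a.s. -/
theorem condexp_along_converging_grids
    {Ω : Type*} [MeasurableSpace Ω] (P : Measure Ω) [IsProbabilityMeasure P]
    {d N : ℕ} (hN : 0 < N)
    (X : Ω → EuclideanSpace ℝ (Fin d)) (hXm : Measurable X)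
    (x : ℕ → Fin N → EuclideanSpace ℝ (Fin d))
    (C : ℕ → Fin N → Set (EuclideanSpace ℝ (Fin d)))
    (hCmeas : ∀ k i, MeasurableSet (C k i))
    (hCpart : ∀ k ξ, ∃! i, ξ ∈ C k i)
    (hCvor : ∀ k i, ∀ ξ ∈ C k i, ∀ j, dist ξ (x k i) ≤ dist ξ (x k j))
    (xlim : Fin N → EuclideanSpace ℝ (Fin d))
    (Clim : Fin N → Set (EuclideanSpace ℝ (Fin d)))
    (hCmeas' : ∀ i, MeasurableSet (Clim i))
    (hCpart' : ∀ ξ, ∃! i, ξ ∈ Clim i)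
    (hCvor' : ∀ i, ∀ ξ ∈ Clim i, ∀ j, dist ξ (xlim i) ≤ dist ξ (xlim j))
    (hdistinct : ∀ i j, i ≠ j → xlim i ≠ xlim j)
    (hbd : P {ω | X ω ∈ ⋃ i, frontier (Clim i)} = 0)
    (hlim : Tendsto x atTop (𝓝 xlim))
    (Y : Ω → ℝ) (hY : Integrable Y P) :
    ∀ᵐ ω ∂P, Tendsto
      (fun k => (P[Y | MeasurableSpace.comap
          (fun ω' => nnProj (x k) (C k) (X ω')) inferInstance]) ω)
      atTop
      (𝓝 ((P[Y | MeasurableSpace.comap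
          (fun ω' => nnProj xlim Clim (X ω')) inferInstance]) ω)) := by
  classical
  -- notation
  set f : ℕ → Ω → EuclideanSpace ℝ (Fin d) :=
    fun k ω' => nnProj (x k) (C k) (X ω') with hfdef
  set flim : Ω → EuclideanSpace ℝ (Fin d) :=
    fun ω' => nnProj xlim Clim (X ω') with hflimdef
  have hfm : ∀ k, Measurable (f k) :=
    fun k => (measurable_nnProj (x k) (hCmeas k)).comp hXm
  have hflimm : Measurable flim := (measurable_nnProj xlim hCmeas').comp hXm
  have hxc : ∀ i, Tendsto (fun k => x k i) atTop (𝓝 (xlim i)) :=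
    fun i => tendsto_pi_nhds.mp hlim i
  -- values of f
  have hfval : ∀ k ξ i, ξ ∈ C k i → nnProj (x k) (C k) ξ = x k i :=
    fun k ξ i h => nnProj_eq_of_mem (hCpart k) h
  have hflimval : ∀ ξ i, ξ ∈ Clim i → nnProj xlim Clim ξ = xlim i :=
    fun ξ i h => nnProj_eq_of_mem hCpart' h
  -- atoms
  set D : ℕ → Fin N → Set Ω := fun k i => f k ⁻¹' {x k i} with hDdef
  set Dlim : Fin N → Set Ω := fun i => flim ⁻¹' {xlim i} with hDlimdef
  have hDmeas : ∀ k i, MeasurableSet (D k i) :=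
    fun k i => (hfm k) (measurableSet_singleton _)
  have hDlimmeas : ∀ i, MeasurableSet (Dlim i) :=
    fun i => hflimm (measurableSet_singleton _)
  -- the frontier is a.e. avoided
  have hfrontier : ∀ᵐ ω' ∂P, X ω' ∉ ⋃ i, frontier (Clim i) := by
    rw [ae_iff]
    simpa using hbd
  -- interior membership and eventual cell membership for good points
  have hkey : ∀ ξ : EuclideanSpace ℝ (Fin d), ξ ∉ (⋃ i, frontier (Clim i)) →
      ∃ j, ξ ∈ Clim j ∧ (∀ᶠ k in atTop, ξ ∈ C k j) := by
    intro ξ hξ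
    obtain ⟨j, hj, -⟩ := hCpart' ξ
    refine ⟨j, hj, ?_⟩
    have hint : ξ ∈ interior (Clim j) := by
      by_contra hni
      exact hξ (Set.mem_iUnion.mpr ⟨j, ⟨subset_closure hj, hni⟩⟩)
    have hstrict : ∀ i', i' ≠ j → dist ξ (xlim j) < dist ξ (xlim i') := by
      intro i' hi'
      exact dist_lt_of_interior (hdistinct j i' (Ne.symm hi'))
        (fun η hη => hCvor' j η hη i') hint
    have hev : ∀ᶠ k in atTop, ∀ i', i' ≠ j →
        dist ξ (x k j) < dist ξ (x k i') := by
      rw [eventually_all]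
      intro i'
      by_cases hi' : i' = j
      · simp [hi']
      · have hd : Tendsto (fun k => dist ξ (x k i') - dist ξ (x k j)) atTop
            (𝓝 (dist ξ (xlim i') - dist ξ (xlim j))) :=
          (tendsto_const_nhds.dist (hxc i')).sub (tendsto_const_nhds.dist (hxc j))
        have hpos : 0 < dist ξ (xlim i') - dist ξ (xlim j) :=
          sub_pos.mpr (hstrict i' hi')
        filter_upwards [hd.eventually (eventually_gt_nhds hpos)] with k hk
        intro _
        linarith
    filter_upwards [hev] with k hk
    obtain ⟨i0, hi0, -⟩ := hCpart k ξ
    by_cases hij : i0 = j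
    · rwa [hij] at hi0
    · exact absurd (hCvor k i0 ξ hi0 j) (not_le.mpr (hk i0 hij))
  -- pointwise a.e. convergence of atom indicators
  have hptwise : ∀ᵐ ω' ∂P, ∀ i, ∀ᶠ k in atTop, (ω' ∈ D k i ↔ ω' ∈ Dlim i) := by
    filter_upwards [hfrontier] with ω' hω'
    obtain ⟨j, hj, hev⟩ := hkey (X ω') hω'
    have hflimω : flim ω' = xlim j := hflimval (X ω') j hj
    intro i
    by_cases hij : i = j
    · subst hij
      filter_upwards [hev] with k hk
      have hfk : f k ω' = x k i := hfval k (X ω') i hk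
      simp [hDdef, hDlimdef, Set.mem_preimage, hfk, hflimω]
    · have hne : ∀ᶠ k in atTop, x k j ≠ x k i := by
        have hd : Tendsto (fun k => dist (x k j) (x k i)) atTop
            (𝓝 (dist (xlim j) (xlim i))) := (hxc j).dist (hxc i)
        have hpos : 0 < dist (xlim j) (xlim i) :=
          dist_pos.mpr (hdistinct j i (Ne.symm hij))
        filter_upwards [hd.eventually (eventually_gt_nhds hpos)] with k hk
        exact dist_pos.mp hk
      filter_upwards [hev, hne] with k hk hkne
      have hfk : f k ω' = x k j := hfval k (X ω') j hk
      have h1 : ω' ∉ D k i := by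
        simp only [hDdef, Set.mem_preimage, Set.mem_singleton_iff, hfk]
        exact hkne
      have h2 : ω' ∉ Dlim i := by
        simp only [hDlimdef, Set.mem_preimage, Set.mem_singleton_iff, hflimω]
        exact hdistinct j i (Ne.symm hij)
      simp [h1, h2]
  -- indicator convergence, pointwise
  have hindY : ∀ i, ∀ᵐ ω' ∂P, Tendsto (fun k => (D k i).indicator Y ω') atTop
      (𝓝 ((Dlim i).indicator Y ω')) := by
    intro i
    filter_upwards [hptwise] with ω' hω'
    have hevt : ∀ᶠ k in atTop, (D k i).indicator Y ω' = (Dlim i).indicator Y ω' := by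
      filter_upwards [hω' i] with k hk
      by_cases h : ω' ∈ Dlim i
      · rw [Set.indicator_of_mem (hk.mpr h), Set.indicator_of_mem h]
      · rw [Set.indicator_of_notMem (fun hm => h (hk.mp hm)),
          Set.indicator_of_notMem h]
    exact Tendsto.congr' (hevt.mono fun k hk => hk.symm) tendsto_const_nhds
  have hind1 : ∀ i, ∀ᵐ ω' ∂P, Tendsto
      (fun k => (D k i).indicator (fun _ => (1:ℝ)) ω') atTop
      (𝓝 ((Dlim i).indicator (fun _ => (1:ℝ)) ω')) := by
    intro i
    filter_upwards [hptwise] with ω' hω'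
    have hevt : ∀ᶠ k in atTop, (D k i).indicator (fun _ => (1:ℝ)) ω'
        = (Dlim i).indicator (fun _ => (1:ℝ)) ω' := by
      filter_upwards [hω' i] with k hk
      by_cases h : ω' ∈ Dlim i
      · rw [Set.indicator_of_mem (hk.mpr h), Set.indicator_of_mem h]
      · rw [Set.indicator_of_notMem (fun hm => h (hk.mp hm)),
          Set.indicator_of_notMem h]
    exact Tendsto.congr' (hevt.mono fun k hk => hk.symm) tendsto_const_nhds
  -- convergence of atom integrals
  have hIconv : ∀ i, Tendsto (fun k => ∫ ω' in D k i, Y ω' ∂P) atTop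
      (𝓝 (∫ ω' in Dlim i, Y ω' ∂P)) := by
    intro i
    have := tendsto_integral_of_dominated_convergence (μ := P)
      (F := fun k => (D k i).indicator Y) (f := (Dlim i).indicator Y)
      (bound := fun ω' => |Y ω'|)
      (fun k => hY.1.indicator (hDmeas k i)) hY.abs
      (fun k => ae_of_all _ fun ω' => by
        by_cases h : ω' ∈ D k i
        · simp only [Set.indicator_of_mem h]; exact le_refl _
        · simp only [Set.indicator_of_notMem h]; simp)
      (hindY i)
    simpa [integral_indicator (hDmeas _ i), integral_indicator (hDlimmeas i)]
      using this
  have hPconv : ∀ i, Tendsto (fun k => (P (D k i)).toReal) atTop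
      (𝓝 ((P (Dlim i)).toReal)) := by
    intro i
    have := tendsto_integral_of_dominated_convergence (μ := P)
      (F := fun k => (D k i).indicator (fun _ => (1:ℝ)))
      (f := (Dlim i).indicator (fun _ => (1:ℝ)))
      (bound := fun _ => (1:ℝ))
      (fun k => (stronglyMeasurable_const.indicator (hDmeas k i)).aestronglyMeasurable)
      (integrable_const 1)
      (fun k => ae_of_all _ fun ω' => by
        by_cases h : ω' ∈ D k i
        · simp only [Set.indicator_of_mem h]; simp
        · simp only [Set.indicator_of_notMem h]; simp)
      (hind1 i)
    exact (by simpa [integral_indicator (hDmeas _ i), integral_indicator (hDlimmeas i)]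
      using this : Tendsto (fun n => P.real (D n i)) atTop (𝓝 (P.real (Dlim i))))
  -- null atoms are a.e. avoided
  have hnull : ∀ᵐ ω' ∂P, ∀ i, P (Dlim i) = 0 → ω' ∉ Dlim i := by
    rw [ae_all_iff]
    intro i
    by_cases h : P (Dlim i) = 0
    · filter_upwards [measure_eq_zero_iff_ae_notMem.mp h] with ω' hω' _
      exact hω'
    · exact ae_of_all _ fun ω' h0 => absurd h0 h
  -- g = condexp a.e.
  have hrange : ∀ k ω', f k ω' ∈ Finset.image (x k) Finset.univ := by
    intro k ω'
    obtain ⟨i, hi, -⟩ := hCpart k (X ω')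
    rw [show f k ω' = x k i from hfval k (X ω') i hi]
    exact Finset.mem_image_of_mem _ (Finset.mem_univ i)
  have hrangelim : ∀ ω', flim ω' ∈ Finset.image xlim Finset.univ := by
    intro ω'
    obtain ⟨i, hi, -⟩ := hCpart' (X ω')
    rw [show flim ω' = xlim i from hflimval (X ω') i hi]
    exact Finset.mem_image_of_mem _ (Finset.mem_univ i)
  have hgk : ∀ᵐ ω' ∂P, ∀ k : ℕ, avgOn P Y (f k ⁻¹' {f k ω'})
      = (P[Y | MeasurableSpace.comap (f k) inferInstance]) ω' := by
    rw [ae_all_iff]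
    exact fun k => condexp_finRange P (f k) (hfm k) _ (hrange k) Y hY
  have hglim : ∀ᵐ ω' ∂P, avgOn P Y (flim ⁻¹' {flim ω'})
      = (P[Y | MeasurableSpace.comap flim inferInstance]) ω' :=
    condexp_finRange P flim hflimm _ hrangelim Y hY
  -- main assembly
  filter_upwards [hfrontier, hnull, hgk, hglim] with ω hωf hωn hωg hωgl
  obtain ⟨j, hj, hev⟩ := hkey (X ω) hωf
  have hflimω : flim ω = xlim j := hflimval (X ω) j hj
  have hωD : ω ∈ Dlim j := by
    simp [hDlimdef, Set.mem_preimage, hflimω]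
  have hP0 : P (Dlim j) ≠ 0 := fun h0 => hωn j h0 hωD
  have hPpos : 0 < (P (Dlim j)).toReal :=
    ENNReal.toReal_pos hP0 (measure_ne_top P _)
  have hPk : ∀ᶠ k in atTop, P (D k j) ≠ 0 := by
    filter_upwards [(hPconv j).eventually (eventually_gt_nhds hPpos)] with k hk
    intro h0
    rw [h0] at hk
    simp at hk
  have hquot : Tendsto (fun k => avgOn P Y (D k j)) atTop
      (𝓝 (avgOn P Y (Dlim j))) := by
    have h1 : Tendsto (fun k => (∫ ω' in D k j, Y ω' ∂P) / (P (D k j)).toReal)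
        atTop (𝓝 ((∫ ω' in Dlim j, Y ω' ∂P) / (P (Dlim j)).toReal)) :=
      (hIconv j).div (hPconv j) (ne_of_gt hPpos)
    have h2 : avgOn P Y (Dlim j)
        = (∫ ω' in Dlim j, Y ω' ∂P) / (P (Dlim j)).toReal := if_neg hP0
    rw [h2]
    refine Tendsto.congr' ?_ h1
    filter_upwards [hPk] with k hk
    exact (if_neg hk).symm
  have hgconv : Tendsto (fun k => avgOn P Y (f k ⁻¹' {f k ω})) atTop
      (𝓝 (avgOn P Y (flim ⁻¹' {flim ω}))) := by
    have h2 : flim ⁻¹' {flim ω} = Dlim j := by rw [hflimω]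
    rw [h2]
    refine Tendsto.congr' ?_ hquot
    filter_upwards [hev] with k hk
    have hfk : f k ω = x k j := hfval k (X ω) j hk
    rw [hfk]
  rw [← hωgl]
  exact hgconv.congr fun k => hωg k
end

section
/- For any N-tuple x = (x_1,...,x_N) of pairwise distinct points with P_X-negligible Voronoi cell boundaries, the gradient of the distortion function satisfies |∇𝒢(x)|² ≤ 4 𝒢(x), where 𝒢(x) = E min_{1≤i≤N}|X − x_i|² and ∂𝒢/∂x_i = 2 E[1_{X∈C_i(x)}(x_i − X)]. -/
open MeasureTheory Filter Topology

/-- Gradient bound for the distortion: `|∇𝒢(x)|² ≤ 4 𝒢(x)`, where the `i`-th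
component of the gradient is `2 E[1_{X ∈ C_i}(x_i − X)]`. -/
theorem distortion_gradient_bound
    {Ω : Type*} [MeasurableSpace Ω] (P : Measure Ω) [IsProbabilityMeasure P]
    {d N : ℕ} (hN : 0 < N)
    (X : Ω → EuclideanSpace ℝ (Fin d)) (hXm : Measurable X) (hX : MemLp X 2 P)
    (x : Fin N → EuclideanSpace ℝ (Fin d))
    (hdistinct : ∀ i j, i ≠ j → x i ≠ x j)
    (C : Fin N → Set (EuclideanSpace ℝ (Fin d)))
    (hCmeas : ∀ i, MeasurableSet (C i))
    (hCpart : ∀ ξ, ∃! i, ξ ∈ C i)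
    (hCvor : ∀ i, ∀ ξ ∈ C i, ∀ j, dist ξ (x i) ≤ dist ξ (x j))
    (hbd : P {ω | X ω ∈ ⋃ i, frontier (C i)} = 0) :
    ∑ i, ‖(2 : ℝ) • ∫ ω in X ⁻¹' C i, (x i - X ω) ∂P‖ ^ 2
      ≤ 4 * ∫ ω, (⨅ i, dist (X ω) (x i) ^ 2) ∂P := by
  haveI : Nonempty (Fin N) := ⟨⟨0, hN⟩⟩
  set A : Fin N → Set Ω := fun i => X ⁻¹' C i with hA
  have hAmeas : ∀ i, MeasurableSet (A i) := fun i => hXm (hCmeas i)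
  set F : Ω → ℝ := fun ω => ⨅ j, dist (X ω) (x j) ^ 2 with hF
  have hFmeas : Measurable F :=
    Measurable.iInf fun j => (hXm.dist measurable_const).pow_const 2
  have hFnonneg : ∀ ω, 0 ≤ F ω := fun ω => le_ciInf fun j => by positivity
  -- integrability of F
  have hg : Integrable (fun ω => dist (X ω) (x ⟨0, hN⟩) ^ 2) P := by
    have h1 : MemLp (fun ω => ‖X ω - x ⟨0, hN⟩‖) 2 P := (hX.sub (memLp_const _)).norm
    have h2 := h1.integrable_sq
    simpa [dist_eq_norm] using h2
  have hFint : Integrable F P := by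
    refine hg.mono' hFmeas.aestronglyMeasurable (Filter.Eventually.of_forall fun ω => ?_)
    rw [Real.norm_eq_abs, abs_of_nonneg (hFnonneg ω)]
    exact ciInf_le (Set.Finite.bddBelow (Set.finite_range _)) _
  -- key per-cell bound
  have key : ∀ i, ‖∫ ω in A i, (x i - X ω) ∂P‖ ^ 2 ≤ ∫ ω in A i, F ω ∂P := by
    intro i
    set h : Ω → ℝ := (A i).indicator (fun ω => ‖x i - X ω‖) with hh
    have hmem : MemLp h 2 P :=
      MemLp.indicator (hAmeas i) (((memLp_const (x i)).sub hX).norm)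
    have step1 : ‖∫ ω in A i, (x i - X ω) ∂P‖ ≤ ∫ ω, h ω ∂P := by
      rw [hh, integral_indicator (hAmeas i)]
      exact norm_integral_le_integral_norm _
    have step2 : (∫ ω, h ω ∂P) ^ 2 ≤ ∫ ω, h ω ^ 2 ∂P := by
      have hv := ProbabilityTheory.variance_nonneg h P
      rw [ProbabilityTheory.variance_eq_sub hmem] at hv
      have : (∫ ω, (h ^ 2) ω ∂P) = ∫ ω, h ω ^ 2 ∂P := by simp [Pi.pow_apply]
      rw [this] at hv
      linarith
    have step3 : (∫ ω, h ω ^ 2 ∂P) = ∫ ω in A i, ‖x i - X ω‖ ^ 2 ∂P := by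
      have : (fun ω => h ω ^ 2) = (A i).indicator (fun ω => ‖x i - X ω‖ ^ 2) := by
        funext ω
        by_cases hω : ω ∈ A i <;>
          simp [hh, Set.indicator_of_mem, Set.indicator_of_notMem, hω]
      rw [this, integral_indicator (hAmeas i)]
    have step4 : (∫ ω in A i, ‖x i - X ω‖ ^ 2 ∂P) = ∫ ω in A i, F ω ∂P := by
      refine setIntegral_congr_fun (hAmeas i) fun ω hω => ?_
      have hXω : X ω ∈ C i := hω
      have hminle : ∀ j, dist (X ω) (x i) ^ 2 ≤ dist (X ω) (x j) ^ 2 := fun j =>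
        pow_le_pow_left₀ dist_nonneg (hCvor i (X ω) hXω j) 2
      have : F ω = dist (X ω) (x i) ^ 2 :=
        le_antisymm (ciInf_le (Set.Finite.bddBelow (Set.finite_range _)) i)
          (le_ciInf hminle)
      rw [this, dist_eq_norm, norm_sub_rev]
    calc ‖∫ ω in A i, (x i - X ω) ∂P‖ ^ 2 ≤ (∫ ω, h ω ∂P) ^ 2 := by
          apply pow_le_pow_left₀ (norm_nonneg _) step1
      _ ≤ ∫ ω, h ω ^ 2 ∂P := step2
      _ = ∫ ω in A i, F ω ∂P := by rw [step3, step4]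
  -- the cells partition Ω
  have hA_disj : Pairwise (Function.onFun Disjoint A) := by
    intro i j hij
    refine Set.disjoint_left.2 fun ω hi hj => hij ?_
    obtain ⟨k, -, hk⟩ := hCpart (X ω)
    exact (hk i hi).trans (hk j hj).symm
  have hA_union : (⋃ i, A i) = Set.univ := by
    ext ω
    simp only [Set.mem_iUnion, Set.mem_univ, iff_true]
    obtain ⟨k, hk, -⟩ := hCpart (X ω)
    exact ⟨k, hk⟩
  have hsum : (∑ i, ∫ ω in A i, F ω ∂P) = ∫ ω, F ω ∂P := by
    have := integral_iUnion hAmeas hA_disj hFint.integrableOn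
    rw [hA_union] at this
    simp only [Measure.restrict_univ] at this
    rw [this, tsum_fintype]
  calc ∑ i, ‖(2 : ℝ) • ∫ ω in A i, (x i - X ω) ∂P‖ ^ 2
      = ∑ i, 4 * ‖∫ ω in A i, (x i - X ω) ∂P‖ ^ 2 := by
        refine Finset.sum_congr rfl fun i _ => ?_
        rw [norm_smul]
        norm_num [mul_pow]
    _ = 4 * ∑ i, ‖∫ ω in A i, (x i - X ω) ∂P‖ ^ 2 := by rw [Finset.mul_sum]
    _ ≤ 4 * ∑ i, ∫ ω in A i, F ω ∂P := by
        have := Finset.sum_le_sum (fun i (_ : i ∈ Finset.univ) => key i)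
        linarith
    _ = 4 * ∫ ω, F ω ∂P := by rw [hsum]
end
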